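/- Let s, c, ε, y₀ be real numbers with s > 0, suppose (1 − (1+ε)/s)² − 4c/s > 0, set Υ = √((1 − (1+ε)/s)² − 4c/s), assume |2y₀ − (1 − (1+ε)/s)| < Υ, and define T̃(t) = ½(1 − (1+ε)/s) + (Υ/2)·tanh((sΥ/2)·t + arctanh((2y₀ − (1 − (1+ε)/s))/Υ)). Then T̃(0) = y₀ and T̃ satisfies T̃′(t) = (s − (1+ε))·T̃(t) − s·T̃(t)² − c for all t ∈ ℝ. -/

import Mathlib

/-- The real inverse hyperbolic tangent, `arctanh x = ½ log((1+x)/(1-x))`,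
defined for `x ∈ (-1, 1)`. -/
noncomputable def arctanh (x : ℝ) : ℝ := (1 / 2) * Real.log ((1 + x) / (1 - x))

lemma tanh_arctanh {x : ℝ} (h : |x| < 1) : Real.tanh (arctanh x) = x := by
  have h1 : -1 < x := neg_lt_of_abs_lt h
  have h2 : x < 1 := lt_of_abs_lt h
  have hr : 0 < (1 + x) / (1 - x) := div_pos (by linarith) (by linarith)
  set y := arctanh x with hy
  have hE : Real.exp y * Real.exp y = (1 + x) / (1 - x) := by
    rw [← Real.exp_add, hy, arctanh, show 1/2 * Real.log ((1+x)/(1-x)) + 1/2 * Real.log ((1+x)/(1-x)) = Real.log ((1+x)/(1-x)) by ring, Real.exp_log hr]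
  have hEpos : 0 < Real.exp y := Real.exp_pos y
  rw [Real.tanh_eq_sinh_div_cosh, Real.sinh_eq, Real.cosh_eq, Real.exp_neg]
  rw [div_eq_iff (by positivity)]
  have key : Real.exp y * Real.exp y * (1 - x) = 1 + x := by
    have hx1 : (1:ℝ) - x ≠ 0 := by linarith
    rw [hE]; field_simp
  field_simp
  nlinarith [key]

lemma hasDerivAt_tanh (x : ℝ) : HasDerivAt Real.tanh (1 - Real.tanh x ^ 2) x := by
  have h := (Real.hasDerivAt_sinh x).div (Real.hasDerivAt_cosh x) (Real.cosh_pos x).ne'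
  have : ∀ y, Real.sinh y / Real.cosh y = Real.tanh y := fun y => (Real.tanh_eq_sinh_div_cosh y).symm
  simp only [Pi.div_def, this] at h
  refine h.congr_deriv ?_
  symm
  rw [Real.tanh_eq_sinh_div_cosh]
  have hc := (Real.cosh_pos x).ne'
  field_simp

/-- The ε-SIS tanh-formula
`T̃(t) = ½(1 - (1+ε)/s) + (Υ/2) tanh((sΥ/2)t + arctanh((2y₀ - (1 - (1+ε)/s))/Υ))`
satisfies `T̃(0) = y₀` and `T̃' = (s - (1+ε))T̃ - sT̃² - c`. -/
theorem epsilon_tanh_formula_solves_riccati (s c ε y₀ Υ : ℝ) (hs : 0 < s)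
    (hdisc : 0 < (1 - (1 + ε) / s) ^ 2 - 4 * c / s)
    (hΥ : Υ = Real.sqrt ((1 - (1 + ε) / s) ^ 2 - 4 * c / s))
    (hy₀ : |2 * y₀ - (1 - (1 + ε) / s)| < Υ)
    (T : ℝ → ℝ)
    (hT : ∀ t, T t = (1 / 2) * (1 - (1 + ε) / s) +
      (Υ / 2) * Real.tanh ((s * Υ / 2) * t +
        arctanh ((2 * y₀ - (1 - (1 + ε) / s)) / Υ))) :
    T 0 = y₀ ∧ ∀ t, HasDerivAt T ((s - (1 + ε)) * T t - s * (T t) ^ 2 - c) t := by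
  have hΥpos : 0 < Υ := hΥ ▸ Real.sqrt_pos.mpr hdisc
  have hΥsq : Υ ^ 2 = (1 - (1 + ε) / s) ^ 2 - 4 * c / s := by
    rw [hΥ, Real.sq_sqrt hdisc.le]
  have hx0 : |(2 * y₀ - (1 - (1 + ε) / s)) / Υ| < 1 := by
    rw [abs_div, abs_of_pos hΥpos]
    exact (div_lt_one hΥpos).mpr hy₀
  constructor
  · rw [hT 0, mul_zero, zero_add, tanh_arctanh hx0]
    field_simp
    ring
  · intro t
    have hu : HasDerivAt (fun t : ℝ => (s * Υ / 2) * t +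
        arctanh ((2 * y₀ - (1 - (1 + ε) / s)) / Υ)) (s * Υ / 2) t := by
      simpa using ((hasDerivAt_id t).const_mul (s * Υ / 2)).add_const (arctanh ((2 * y₀ - (1 - (1 + ε) / s)) / Υ))
    set u := (s * Υ / 2) * t + arctanh ((2 * y₀ - (1 - (1 + ε) / s)) / Υ) with hudef
    have htanh : HasDerivAt (fun t : ℝ => Real.tanh ((s * Υ / 2) * t +
        arctanh ((2 * y₀ - (1 - (1 + ε) / s)) / Υ)))
        ((1 - Real.tanh u ^ 2) * (s * Υ / 2)) t := (hasDerivAt_tanh u).comp (h₂ := Real.tanh) t hu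
    have h2 := (htanh.const_mul (Υ / 2)).const_add ((1 / 2) * (1 - (1 + ε) / s))
    have hfun : T = fun t : ℝ => (1 / 2) * (1 - (1 + ε) / s) +
        (Υ / 2) * Real.tanh ((s * Υ / 2) * t +
          arctanh ((2 * y₀ - (1 - (1 + ε) / s)) / Υ)) := funext hT
    rw [hfun]
    refine h2.congr_deriv ?_
    symm
    simp only
    have hsA : s * (1 - (1 + ε) / s) = s - (1 + ε) := by field_simp
    have hsΥ : s * Υ ^ 2 = s * (1 - (1 + ε) / s) ^ 2 - 4 * c := by
      rw [hΥsq]; field_simp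
    set τ := Real.tanh u
    set A := 1 - (1 + ε) / s
    linear_combination (-((1 / 2) * A + (Υ / 2) * τ)) * hsA - (1 / 4) * hsΥ
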